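/- (Gilbert–Varshamov-like Bound) Let n ≥ 1 and let d be an integer with 1 ≤ d ≤ 2n. If C ⊆ Σⁿ is a code with minimum Gau distance at least d that is maximal with respect to inclusion among all codes in Σⁿ with minimum Gau distance at least d, then 16ⁿ ≤ |C| · Σ_{r=0}^{d−1} Σ_{i=max(0, r−n)}^{⌊r/2⌋} n!/(i!·(r−2i)!·(n−r+i)!) · 9^i · 6^{r−2i}. -/

import Mathlib

/-- The DNA pair alphabet Σ = Fin 4 × Fin 4 (A,G,C,T encoded as 0,1,2,3). -/
abbrev Sig := Fin 4 × Fin 4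

/-- The Gau distance on Σⁿ:
d_G(x,y) = Σⱼ (δ(xⱼ.1, yⱼ.1) + δ(xⱼ.2, yⱼ.2)), where δ(u,v) = 0 if u = v, else 1. -/
def dG (n : ℕ) (x y : Fin n → Sig) : ℕ :=
  ∑ j, ((if (x j).1 = (y j).1 then 0 else 1) + (if (x j).2 = (y j).2 then 0 else 1))

open Finset
def w (s t : Sig) : ℕ := (if s.1 = t.1 then 0 else 1) + (if s.2 = t.2 then 0 else 1)
lemma card_w2 (s : Sig) : (univ.filter fun t => w s t = 2).card = 9 := by revert s; decide
lemma card_w1 (s : Sig) : (univ.filter fun t => w s t = 1).card = 6 := by revert s; decide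
lemma w_eq_zero {s t : Sig} (h : w s t = 0) : t = s := by revert h; revert s t; decide
lemma w_le_two (s t : Sig) : w s t ≤ 2 := by revert s t; decide

lemma dG_eq_sum_w (n : ℕ) (x y : Fin n → Sig) : dG n x y = ∑ j, w (x j) (y j) := rfl

lemma dG_symm (n : ℕ) (x y : Fin n → Sig) : dG n x y = dG n y x := by
  unfold dG; apply Finset.sum_congr rfl; intro j _
  congr 1 <;> simp [eq_comm]

lemma dG_self (n : ℕ) (x : Fin n → Sig) : dG n x x = 0 := by simp [dG]

lemma sum_w_eq (n : ℕ) (x y : Fin n → Sig) :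
    ∑ j, w (x j) (y j) =
      2 * (univ.filter fun j => w (x j) (y j) = 2).card
        + (univ.filter fun j => w (x j) (y j) = 1).card := by
  rw [Finset.card_filter, Finset.card_filter, Finset.mul_sum, ← Finset.sum_add_distrib]
  apply Finset.sum_congr rfl; intro j _
  have := w_le_two (x j) (y j)
  rcases Nat.lt_or_ge (w (x j) (y j)) 1 with h | h
  · interval_cases (w (x j) (y j)) <;> simp
  · interval_cases (w (x j) (y j)) <;> simp

lemma choose_mul_choose_eq (n i a : ℕ) (h : i + a ≤ n) :
    n.choose i * (n - i).choose a =
      n.factorial / (i.factorial * a.factorial * (n - i - a).factorial) := by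
  have hi : i ≤ n := le_trans (Nat.le_add_right _ _) h
  have ha : a ≤ n - i := by omega
  have h1 : n.choose i * i.factorial * (n - i).factorial = n.factorial :=
    Nat.choose_mul_factorial_mul_factorial hi
  have h2 : (n - i).choose a * a.factorial * (n - i - a).factorial = (n - i).factorial :=
    Nat.choose_mul_factorial_mul_factorial ha
  have key : n.factorial =
      n.choose i * (n - i).choose a * (i.factorial * a.factorial * (n - i - a).factorial) := by
    rw [← h1, ← h2]; ring
  rw [key, Nat.mul_div_cancel]
  positivity

lemma card_Q (n i a : ℕ) :
    ((univ : Finset (Finset (Fin n) × Finset (Fin n))).filter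
       (fun p => Disjoint p.1 p.2 ∧ p.1.card = i ∧ p.2.card = a)).card
    = n.choose i * (n - i).choose a := by
  rw [Finset.card_eq_sum_card_fiberwise (f := Prod.fst) (t := powersetCard i univ)
    (by intro p hp
        simp only [mem_coe, mem_filter, mem_univ, true_and] at hp
        exact mem_powersetCard.2 ⟨subset_univ _, hp.2.1⟩)]
  have hfib : ∀ A ∈ powersetCard i (univ : Finset (Fin n)),
      (((univ : Finset (Finset (Fin n) × Finset (Fin n))).filter
        (fun p => Disjoint p.1 p.2 ∧ p.1.card = i ∧ p.2.card = a)).filter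
          (fun p => p.1 = A)).card = (n - i).choose a := by
    intro A hA
    rw [mem_powersetCard] at hA
    have hc : (univ \ A).card = n - i := by
      rw [Finset.card_sdiff_of_subset (subset_univ _), card_univ, Fintype.card_fin, hA.2]
    rw [← hc, ← Finset.card_powersetCard]
    · apply Finset.card_bij (fun p _ => p.2)
      · intro p hp
        simp only [mem_filter, mem_univ, true_and] at hp
        obtain ⟨⟨hdisj, hc1, hc2⟩, h1⟩ := hp
        refine mem_powersetCard.2 ⟨subset_sdiff.2 ⟨subset_univ _, ?_⟩, hc2⟩
        rw [← h1]; exact hdisj.symm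
      · intro p hp q hq hpq
        simp only [mem_filter] at hp hq
        exact Prod.ext (hp.2.trans hq.2.symm) hpq
      · intro B hB
        rw [mem_powersetCard, subset_sdiff] at hB
        refine ⟨(A, B), ?_, rfl⟩
        simp only [mem_filter, mem_univ, true_and]
        exact ⟨⟨hB.1.2.symm, hA.2, hB.2⟩, trivial⟩
  rw [Finset.sum_congr rfl hfib, Finset.sum_const, Finset.card_powersetCard,
    card_univ, Fintype.card_fin, smul_eq_mul]

lemma sphere_fiber_le (n : ℕ) (x : Fin n → Sig) (A B : Finset (Fin n)) (hd : Disjoint A B) :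
    ((univ : Finset (Fin n → Sig)).filter fun y =>
      (univ.filter fun j => w (x j) (y j) = 2) = A ∧
      (univ.filter fun j => w (x j) (y j) = 1) = B).card
    ≤ 9 ^ A.card * 6 ^ B.card := by
  set t : Fin n → Finset Sig := fun j =>
    if j ∈ A then (univ.filter fun s => w (x j) s = 2)
    else if j ∈ B then (univ.filter fun s => w (x j) s = 1)
    else {x j} with ht
  have hsub : ((univ : Finset (Fin n → Sig)).filter fun y =>
      (univ.filter fun j => w (x j) (y j) = 2) = A ∧
      (univ.filter fun j => w (x j) (y j) = 1) = B) ⊆ Fintype.piFinset t := by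
    intro y hy
    simp only [mem_filter, mem_univ, true_and] at hy
    rw [Fintype.mem_piFinset]
    intro j
    by_cases hA : j ∈ A
    · have : w (x j) (y j) = 2 := by
        rw [← hy.1, mem_filter] at hA; exact hA.2
      simp [ht, hA, this]
    · by_cases hB : j ∈ B
      · have : w (x j) (y j) = 1 := by
          rw [← hy.2, mem_filter] at hB; exact hB.2
        simp [ht, hA, hB, this]
      · have h2 : w (x j) (y j) ≠ 2 := by
          intro h; exact hA (by rw [← hy.1]; simp [h])
        have h1 : w (x j) (y j) ≠ 1 := by
          intro h; exact hB (by rw [← hy.2]; simp [h])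
        have h0 : w (x j) (y j) = 0 := by
          have := w_le_two (x j) (y j); omega
        simp [ht, hA, hB, w_eq_zero h0]
  calc _ ≤ (Fintype.piFinset t).card := Finset.card_le_card hsub
    _ = ∏ j, (t j).card := Fintype.card_piFinset t
    _ = ∏ j, (if j ∈ A then 9 else if j ∈ B then 6 else 1) := by
        apply Finset.prod_congr rfl; intro j _
        by_cases hA : j ∈ A
        · simp [ht, hA, card_w2]
        · by_cases hB : j ∈ B
          · simp [ht, hA, hB, card_w1]
          · simp [ht, hA, hB]
    _ = 9 ^ A.card * 6 ^ B.card := by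
        rw [← Finset.prod_mul_prod_compl A]
        congr 1
        · rw [Finset.prod_congr rfl (fun j hj => if_pos hj), Finset.prod_const]
        · rw [Finset.prod_congr rfl (g := fun j => if j ∈ B then 6 else 1)
            (fun j hj => if_neg (by simpa using hj)),
            Finset.prod_ite_mem, Finset.inter_eq_right.2
              (fun b hb => by simpa using disjoint_right.1 hd hb),
            Finset.prod_const]

lemma sphere_card_le (n r : ℕ) (x : Fin n → Sig) :
    ((univ : Finset (Fin n → Sig)).filter fun y => dG n x y = r).card ≤
      ∑ i ∈ Icc (r - n) (r / 2),
        n.choose i * (n - i).choose (r - 2 * i) * (9 ^ i * 6 ^ (r - 2 * i)) := by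
  classical
  set P : Finset (Finset (Fin n) × Finset (Fin n)) :=
    univ.filter (fun p => Disjoint p.1 p.2 ∧ 2 * p.1.card + p.2.card = r) with hP
  set F : (Fin n → Sig) → Finset (Fin n) × Finset (Fin n) :=
    fun y => (univ.filter fun j => w (x j) (y j) = 2,
              univ.filter fun j => w (x j) (y j) = 1) with hF
  have hdisj : ∀ y : Fin n → Sig, Disjoint (F y).1 (F y).2 := by
    intro y
    rw [Finset.disjoint_left]
    intro j h2 h1
    simp only [hF, mem_filter] at h2 h1
    omega
  have hmaps : ∀ y ∈ (univ : Finset (Fin n → Sig)).filter fun y => dG n x y = r,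
      F y ∈ P := by
    intro y hy
    simp only [mem_filter, mem_univ, true_and] at hy
    simp only [hP, mem_filter, mem_univ, true_and]
    refine ⟨hdisj y, ?_⟩
    rw [← sum_w_eq, ← dG_eq_sum_w, hy]
  rw [Finset.card_eq_sum_card_fiberwise hmaps]
  have step1 : ∑ p ∈ P, (((univ : Finset (Fin n → Sig)).filter fun y => dG n x y = r).filter
        fun y => F y = p).card ≤ ∑ p ∈ P, 9 ^ p.1.card * 6 ^ p.2.card := by
    apply Finset.sum_le_sum
    intro p hp
    simp only [hP, mem_filter, mem_univ, true_and] at hp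
    calc _ ≤ ((univ : Finset (Fin n → Sig)).filter fun y =>
            (univ.filter fun j => w (x j) (y j) = 2) = p.1 ∧
            (univ.filter fun j => w (x j) (y j) = 1) = p.2).card := by
          apply Finset.card_le_card
          intro y hy
          simp only [mem_filter, mem_univ, true_and, hF, Prod.ext_iff] at hy ⊢
          exact hy.2
      _ ≤ _ := sphere_fiber_le n x p.1 p.2 hp.1
  refine le_trans step1 ?_
  have hmaps2 : ∀ p ∈ P, p.1.card ∈ Icc (r - n) (r / 2) := by
    intro p hp
    simp only [hP, mem_filter, mem_univ, true_and] at hp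
    have hun : p.1.card + p.2.card ≤ n := by
      rw [← Finset.card_union_of_disjoint hp.1]
      calc (p.1 ∪ p.2).card ≤ (univ : Finset (Fin n)).card := card_le_card (subset_univ _)
        _ = n := by rw [card_univ, Fintype.card_fin]
    rw [mem_Icc]
    omega
  rw [← Finset.sum_fiberwise_of_maps_to hmaps2 (fun p => 9 ^ p.1.card * 6 ^ p.2.card)]
  apply Finset.sum_le_sum
  intro i hi
  rw [mem_Icc] at hi
  have hfe : P.filter (fun p => p.1.card = i) =
      (univ : Finset (Finset (Fin n) × Finset (Fin n))).filter
        (fun p => Disjoint p.1 p.2 ∧ p.1.card = i ∧ p.2.card = r - 2 * i) := by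
    rw [hP, Finset.filter_filter]
    apply Finset.filter_congr
    intro p _
    constructor
    · rintro ⟨⟨h1, h2⟩, h3⟩; exact ⟨h1, h3, by omega⟩
    · rintro ⟨h1, h2, h3⟩
      have h2r : 2 * i ≤ r := by omega
      exact ⟨⟨h1, by omega⟩, h2⟩
  have hconst : ∀ p ∈ P.filter (fun p => p.1.card = i),
      9 ^ p.1.card * 6 ^ p.2.card = 9 ^ i * 6 ^ (r - 2 * i) := by
    intro p hp
    simp only [hP, mem_filter, mem_univ, true_and] at hp
    obtain ⟨⟨_, hsum⟩, hc⟩ := hp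
    rw [hc]
    congr 1
    congr 1
    omega
  rw [Finset.sum_congr rfl hconst, Finset.sum_const, smul_eq_mul, hfe, card_Q, mul_assoc]

lemma ball_card_le (n d : ℕ) (x : Fin n → Sig) :
    ((univ : Finset (Fin n → Sig)).filter fun y => dG n x y ≤ d - 1).card ≤
      ∑ r ∈ Icc 0 (d - 1), ∑ i ∈ Icc (r - n) (r / 2),
        n.factorial / (i.factorial * (r - 2 * i).factorial * (n + i - r).factorial)
          * 9 ^ i * 6 ^ (r - 2 * i) := by
  have hmaps : ∀ y ∈ (univ : Finset (Fin n → Sig)).filter fun y => dG n x y ≤ d - 1,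
      dG n x y ∈ Icc 0 (d - 1) := by
    intro y hy
    simp only [mem_filter, mem_univ, true_and] at hy
    rw [mem_Icc]
    omega
  rw [Finset.card_eq_sum_card_fiberwise hmaps]
  apply Finset.sum_le_sum
  intro r _
  calc (((univ : Finset (Fin n → Sig)).filter fun y => dG n x y ≤ d - 1).filter
        fun y => dG n x y = r).card
      ≤ ((univ : Finset (Fin n → Sig)).filter fun y => dG n x y = r).card := by
        apply Finset.card_le_card
        intro y hy
        simp only [mem_filter, mem_univ, true_and] at hy ⊢
        exact hy.2
    _ ≤ ∑ i ∈ Icc (r - n) (r / 2),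
          n.choose i * (n - i).choose (r - 2 * i) * (9 ^ i * 6 ^ (r - 2 * i)) :=
        sphere_card_le n r x
    _ = _ := by
        apply Finset.sum_congr rfl
        intro i hi
        rw [mem_Icc] at hi
        have h2i : 2 * i ≤ r := by omega
        have hsum : i + (r - 2 * i) ≤ n := by omega
        rw [choose_mul_choose_eq n i (r - 2 * i) hsum]
        have : n - i - (r - 2 * i) = n + i - r := by omega
        rw [this]; ring

lemma exists_close (n d : ℕ) (C : Finset (Fin n → Sig))
    (hC : ∀ x ∈ C, ∀ y ∈ C, x ≠ y → d ≤ dG n x y)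
    (hmax : ∀ C' : Finset (Fin n → Sig),
      (∀ x ∈ C', ∀ y ∈ C', x ≠ y → d ≤ dG n x y) → C ⊆ C' → C = C')
    (z : Fin n → Sig) : ∃ c ∈ C, dG n c z ≤ d - 1 := by
  by_cases hz : z ∈ C
  · exact ⟨z, hz, by rw [dG_self]; omega⟩
  · have hprop : ¬ (∀ x ∈ insert z C, ∀ y ∈ insert z C, x ≠ y → d ≤ dG n x y) := by
      intro h
      exact hz ((hmax _ h (Finset.subset_insert z C)) ▸ Finset.mem_insert_self z C)
    push_neg at hprop
    obtain ⟨a, ha, b, hb, hab, hlt⟩ := hprop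
    rw [Finset.mem_insert] at ha hb
    rcases ha with ha | ha
    · rcases hb with hb | hb
      · exact absurd (ha.trans hb.symm) hab
      · refine ⟨b, hb, ?_⟩
        rw [dG_symm, ← ha]
        omega
    · rcases hb with hb | hb
      · refine ⟨a, ha, ?_⟩
        rw [← hb]
        omega
      · exact absurd (hC a ha b hb hab) (not_le.2 hlt)

/-- Gilbert–Varshamov-like bound: if C ⊆ Σⁿ has minimum Gau distance ≥ d
and is maximal (w.r.t. inclusion) among such codes, then
16ⁿ ≤ |C| · Σ_{r=0}^{d−1} Σ_{i=max(0,r−n)}^{⌊r/2⌋} n!/(i!·(r−2i)!·(n−r+i)!)·9^i·6^{r−2i}. -/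
theorem gau_gilbert_varshamov_bound (n d : ℕ) (hn : 1 ≤ n) (hd1 : 1 ≤ d) (hd2 : d ≤ 2 * n)
    (C : Finset (Fin n → Sig))
    (hC : ∀ x ∈ C, ∀ y ∈ C, x ≠ y → d ≤ dG n x y)
    (hmax : ∀ C' : Finset (Fin n → Sig),
      (∀ x ∈ C', ∀ y ∈ C', x ≠ y → d ≤ dG n x y) → C ⊆ C' → C = C') :
    16 ^ n ≤
      C.card *
        ∑ r ∈ Finset.Icc 0 (d - 1), ∑ i ∈ Finset.Icc (r - n) (r / 2),
          n.factorial / (i.factorial * (r - 2 * i).factorial * (n + i - r).factorial) *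
            9 ^ i * 6 ^ (r - 2 * i) := by
  classical
  have hcover : (univ : Finset (Fin n → Sig)) ⊆
      C.biUnion (fun c => univ.filter fun y => dG n c y ≤ d - 1) := by
    intro z _
    rw [Finset.mem_biUnion]
    obtain ⟨c, hc, hle⟩ := exists_close n d C hC hmax z
    exact ⟨c, hc, by simp [hle]⟩
  calc (16 : ℕ) ^ n = (univ : Finset (Fin n → Sig)).card := by
        rw [card_univ, Fintype.card_fun, Fintype.card_fin]
        norm_num
    _ ≤ (C.biUnion (fun c => univ.filter fun y => dG n c y ≤ d - 1)).card :=
        Finset.card_le_card hcover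
    _ ≤ ∑ c ∈ C, ((univ : Finset (Fin n → Sig)).filter fun y => dG n c y ≤ d - 1).card :=
        Finset.card_biUnion_le
    _ ≤ ∑ c ∈ C, ∑ r ∈ Finset.Icc 0 (d - 1), ∑ i ∈ Finset.Icc (r - n) (r / 2),
          n.factorial / (i.factorial * (r - 2 * i).factorial * (n + i - r).factorial) *
            9 ^ i * 6 ^ (r - 2 * i) :=
        Finset.sum_le_sum (fun c _ => ball_card_le n d c)
    _ = _ := by rw [Finset.sum_const, smul_eq_mul]
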